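/- Let (u_n), (v_n) be complex sequences and (α_n), (δ_n) complex sequences such that the double series Σ_{n≥0} Σ_{r=0}^{n} |α_r · u_{n-r} · v_{n+r} · δ_n| converges. Define β_n = Σ_{r=0}^{n} α_r u_{n-r} v_{n+r} and γ_n = Σ_{r=n}^{∞} δ_r u_{r-n} v_{r+n}. Then Σ_{n=0}^{∞} α_n γ_n = Σ_{n=0}^{∞} β_n δ_n, with both series converging. -/

import Mathlib

open scoped BigOperators

/-- Bailey's lemma (1948) for infinite series, under absolute convergence of the
double series. -/
theorem bailey_transform_infinite (u v α δ : ℕ → ℂ)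
    (habs : Summable (fun p : ℕ × ℕ =>
      if p.2 ≤ p.1 then ‖α p.2 * u (p.1 - p.2) * v (p.1 + p.2) * δ p.1‖ else 0))
    (β γ : ℕ → ℂ)
    (hβ : ∀ n, β n = ∑ r ∈ Finset.range (n + 1), α r * u (n - r) * v (n + r))
    (hγ : ∀ n, γ n = ∑' r : ℕ, if n ≤ r then δ r * u (r - n) * v (r + n) else 0) :
    Summable (fun n => α n * γ n) ∧ Summable (fun n => β n * δ n) ∧
      ∑' n : ℕ, α n * γ n = ∑' n : ℕ, β n * δ n := by
  set f : ℕ × ℕ → ℂ := fun p =>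
    if p.2 ≤ p.1 then α p.2 * u (p.1 - p.2) * v (p.1 + p.2) * δ p.1 else 0 with hf
  have hfsum : Summable f := by
    apply Summable.of_norm
    convert habs using 1
    funext p
    by_cases h : p.2 ≤ p.1 <;> simp [hf, h]
  -- row sums: for fixed n, ∑' r, f (n, r) = β n * δ n
  have hrow : ∀ n, (∑' r : ℕ, f (n, r)) = β n * δ n := by
    intro n
    have : (∑' r : ℕ, f (n, r)) = ∑ r ∈ Finset.range (n + 1), f (n, r) := by
      apply tsum_eq_sum
      intro r hr
      simp only [Finset.mem_range, not_lt] at hr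
      simp [hf, Nat.lt_of_succ_le hr, Nat.not_le.mpr (Nat.lt_of_succ_le hr)]
    rw [this, hβ, Finset.sum_mul]
    apply Finset.sum_congr rfl
    intro r hr
    simp only [Finset.mem_range] at hr
    simp [hf, Nat.lt_succ_iff.mp hr]
  -- column sums: for fixed r, ∑' n, f (n, r) = α r * γ r
  have hcol : ∀ r, (∑' n : ℕ, f (n, r)) = α r * γ r := by
    intro r
    rw [hγ, ← tsum_mul_left]
    apply tsum_congr
    intro n
    by_cases h : r ≤ n <;> simp [hf, h] <;> ring
  have hswap := hfsum.prod_symm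
  have h1 : Summable (fun r => α r * γ r) := by
    have := (hswap.hasSum.prod_fiberwise fun r => (hswap.prod_factor r).hasSum).summable
    convert this using 1
    funext r
    exact (hcol r).symm
  have h2 : Summable (fun n => β n * δ n) := by
    have := (hfsum.hasSum.prod_fiberwise fun n => (hfsum.prod_factor n).hasSum).summable
    convert this using 1
    funext n
    exact (hrow n).symm
  refine ⟨h1, h2, ?_⟩
  have e1 : ∑' n : ℕ, α n * γ n = ∑' r : ℕ, ∑' n : ℕ, f (n, r) := by
    exact tsum_congr fun r => (hcol r).symm
  have e2 : ∑' n : ℕ, β n * δ n = ∑' n : ℕ, ∑' r : ℕ, f (n, r) := by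
    exact tsum_congr fun n => (hrow n).symm
  rw [e1, e2]
  exact Summable.tsum_comm' hfsum hfsum.prod_factor hswap.prod_factor
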